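/- arXiv:1604.00660 — 4 statements merged into one kernel-verified Lean document; each statement's English description precedes it below -/
import Mathlib

section
/- Let a_1 ≥ a_2 ≥ ... ≥ a_n be rational numbers such that a_i - a_{i+1} ≤ 1 for all 1 ≤ i ≤ n-1, and set A = (1/n)·∑_{i=1}^n a_i. Then for every 1 ≤ r ≤ n, ∑_{i=1}^r a_i - r·A ≤ r(n-r)/2. -/
lemma gauss_q (m : ℕ) : ∑ i ∈ Finset.Icc 1 m, (i : ℚ) = m * (m + 1) / 2 := by
  induction m with
  | zero => simp
  | succ k ih =>
    rw [Finset.sum_Icc_succ_top (by omega), ih]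
    push_cast; ring

/-- If `a 1 ≥ a 2 ≥ … ≥ a n` with consecutive gaps at most `1`, and `A` is the mean, then
`a 1 + ⋯ + a r - r·A ≤ r(n-r)/2` for all `1 ≤ r ≤ n`. -/
theorem stmt3 (n : ℕ) (hn : 1 ≤ n) (a : ℕ → ℚ)
    (hdec : ∀ i, 1 ≤ i → i ≤ n - 1 → a (i + 1) ≤ a i)
    (hgap : ∀ i, 1 ≤ i → i ≤ n - 1 → a i - a (i + 1) ≤ 1)
    (A : ℚ) (hA : A = (∑ i ∈ Finset.Icc 1 n, a i) / (n : ℚ))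
    (r : ℕ) (hr1 : 1 ≤ r) (hrn : r ≤ n) :
    (∑ i ∈ Finset.Icc 1 r, a i) - (r : ℚ) * A ≤ (r : ℚ) * ((n : ℚ) - (r : ℚ)) / 2 := by
  have hn0 : (n : ℚ) ≠ 0 := by positivity
  have hnpos : (0 : ℚ) < n := by positivity
  -- key: a i - a j ≤ j - i for 1 ≤ i ≤ j ≤ n
  have key : ∀ j i, 1 ≤ i → i ≤ j → j ≤ n → a i - a j ≤ (j : ℚ) - (i : ℚ) := by
    intro j
    induction j with
    | zero => intro i h1 h2 _; omega
    | succ k ih =>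
      intro i h1 h2 h3
      rcases Nat.lt_or_ge i (k + 1) with h | h
      · have hik : i ≤ k := by omega
        have hk1 : 1 ≤ k := by omega
        have := ih i h1 hik (by omega)
        have hg := hgap k hk1 (by omega)
        push_cast
        linarith
      · have : i = k + 1 := by omega
        subst this
        simp
  set Sr := ∑ i ∈ Finset.Icc 1 r, a i with hSr
  set T := ∑ i ∈ Finset.Icc (r + 1) n, a i with hT
  have hsplit : ∑ i ∈ Finset.Icc 1 n, a i = Sr + T := by
    rw [hSr, hT, show Finset.Icc 1 r = Finset.Ioc 0 r from rfl,
      Finset.Icc_add_one_left_eq_Ioc r n,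
      show Finset.Icc 1 n = Finset.Ioc 0 n from rfl,
      Finset.sum_Ioc_consecutive _ (Nat.zero_le r) hrn]
  have hcard1 : (Finset.Icc 1 r).card = r := by simp
  have hcard2 : (Finset.Icc (r + 1) n).card = n - r := by
    rw [Nat.card_Icc]; omega
  have hnr : ((n - r : ℕ) : ℚ) = (n : ℚ) - r := by
    push_cast [Nat.cast_sub hrn]; ring
  have main : (n : ℚ) * (Sr - (r : ℚ) * A) ≤ (n : ℚ) * ((r : ℚ) * ((n : ℚ) - (r : ℚ)) / 2) := by
    have hA' : (n : ℚ) * ((r : ℚ) * A) = (r : ℚ) * (Sr + T) := by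
      rw [hA, hsplit]; field_simp
    have step1 : (n : ℚ) * (Sr - (r : ℚ) * A) =
        ∑ i ∈ Finset.Icc 1 r, ∑ j ∈ Finset.Icc (r + 1) n, (a i - a j) := by
      have : ∑ i ∈ Finset.Icc 1 r, ∑ j ∈ Finset.Icc (r + 1) n, (a i - a j)
          = ∑ i ∈ Finset.Icc 1 r, (((n - r : ℕ) : ℚ) * a i - T) := by
        apply Finset.sum_congr rfl
        intro i _
        rw [Finset.sum_sub_distrib, Finset.sum_const, hcard2, nsmul_eq_mul]
      rw [this, Finset.sum_sub_distrib, Finset.sum_const, hcard1, nsmul_eq_mul,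
        ← Finset.mul_sum, ← hSr, hnr, mul_sub, hA']
      ring
    have step2 : ∑ i ∈ Finset.Icc 1 r, ∑ j ∈ Finset.Icc (r + 1) n, (a i - a j)
        ≤ ∑ i ∈ Finset.Icc 1 r, ∑ j ∈ Finset.Icc (r + 1) n, ((j : ℚ) - (i : ℚ)) := by
      apply Finset.sum_le_sum
      intro i hi
      apply Finset.sum_le_sum
      intro j hj
      simp only [Finset.mem_Icc] at hi hj
      exact key j i hi.1 (by omega) hj.2
    have step3 : ∑ i ∈ Finset.Icc 1 r, ∑ j ∈ Finset.Icc (r + 1) n, ((j : ℚ) - (i : ℚ))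
        = (n : ℚ) * ((r : ℚ) * ((n : ℚ) - (r : ℚ)) / 2) := by
      have hj : ∑ j ∈ Finset.Icc (r + 1) n, (j : ℚ)
          = (n : ℚ) * (n + 1) / 2 - (r : ℚ) * (r + 1) / 2 := by
        have : ∑ j ∈ Finset.Icc 1 n, (j : ℚ)
            = ∑ j ∈ Finset.Icc 1 r, (j : ℚ) + ∑ j ∈ Finset.Icc (r + 1) n, (j : ℚ) := by
          rw [show Finset.Icc 1 r = Finset.Ioc 0 r from rfl,
            Finset.Icc_add_one_left_eq_Ioc r n,
            show Finset.Icc 1 n = Finset.Ioc 0 n from rfl,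
            Finset.sum_Ioc_consecutive _ (Nat.zero_le r) hrn]
        rw [gauss_q, gauss_q] at this
        linarith
      have : ∑ i ∈ Finset.Icc 1 r, ∑ j ∈ Finset.Icc (r + 1) n, ((j : ℚ) - (i : ℚ))
          = ∑ i ∈ Finset.Icc 1 r, (((n : ℚ) * (n + 1) / 2 - (r : ℚ) * (r + 1) / 2)
              - ((n : ℚ) - (r : ℚ)) * (i : ℚ)) := by
        apply Finset.sum_congr rfl
        intro i _
        rw [Finset.sum_sub_distrib, Finset.sum_const, hcard2, nsmul_eq_mul, hj, hnr]
      rw [this, Finset.sum_sub_distrib, Finset.sum_const, hcard1, nsmul_eq_mul,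
        ← Finset.mul_sum, gauss_q]
      ring
    calc (n : ℚ) * (Sr - (r : ℚ) * A)
        = ∑ i ∈ Finset.Icc 1 r, ∑ j ∈ Finset.Icc (r + 1) n, (a i - a j) := step1
      _ ≤ ∑ i ∈ Finset.Icc 1 r, ∑ j ∈ Finset.Icc (r + 1) n, ((j : ℚ) - (i : ℚ)) := step2
      _ = (n : ℚ) * ((r : ℚ) * ((n : ℚ) - (r : ℚ)) / 2) := step3
  exact le_of_mul_le_mul_left main hnpos
end

section
/- Let F_q be a finite field, n ≥ 1, x ∈ F_q^×, and let r_1, ..., r_n ∈ {0, 1, ..., q-2}. Consider the sum S = ∑ x_1^{r_1} ⋯ x_n^{r_n}, taken over all (x_1, ..., x_n) ∈ (F_q^×)^n with x_1 ⋯ x_n = x. If r_1 = r_2 = ... = r_n = r then S = (-1)^{n-1} x^r; otherwise S = 0. -/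
open Finset

lemma key (F : Type*) [Field F] [Fintype F] [DecidableEq F] (a b : ℕ)
    (ha : a ≤ Fintype.card F - 2) (hb : b ≤ Fintype.card F - 2) :
    (∑ t : Fˣ, (t : F) ^ a * ((t⁻¹ : Fˣ) : F) ^ b) = if a = b then -1 else 0 := by
  have hq : 2 ≤ Fintype.card F := Fintype.one_lt_card
  have hinv : ∀ t : Fˣ, (t⁻¹ : Fˣ) = t ^ (Fintype.card F - 2) := by
    intro t
    have h1 : t ^ (Fintype.card F - 1) = 1 := by
      have := pow_card_eq_one (G := Fˣ) (x := t)
      rwa [Fintype.card_units] at this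
    have : t * t ^ (Fintype.card F - 2) = 1 := by
      rw [← pow_succ']
      have : Fintype.card F - 2 + 1 = Fintype.card F - 1 := by omega
      rw [this, h1]
    exact eq_comm.mp (eq_inv_of_mul_eq_one_left (by rwa [mul_comm]))
  have : (∑ t : Fˣ, (t : F) ^ a * ((t⁻¹ : Fˣ) : F) ^ b)
      = ∑ t : Fˣ, ((t : F)) ^ (a + b * (Fintype.card F - 2)) := by
    refine Finset.sum_congr rfl fun t _ => ?_
    rw [hinv t, pow_add, pow_mul]
    push_cast
    ring
  rw [this, FiniteField.sum_pow_units]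
  congr 1
  rw [eq_iff_iff]
  constructor
  · intro h
    have hz : ((Fintype.card F : ℤ) - 1) ∣ ((a : ℤ) - b) := by
      obtain ⟨c, hc⟩ := h
      refine ⟨(c : ℤ) - b, ?_⟩
      have hb2 : (b : ℤ) * ((Fintype.card F : ℤ) - 2) = (a : ℤ) + b * (Fintype.card F - 2) - a := by ring
      have : (a : ℤ) + b * ((Fintype.card F : ℤ) - 2) = ((Fintype.card F : ℤ) - 1) * c := by
        have := congrArg (fun k : ℕ => (k : ℤ)) hc
        push_cast at this
        have h2 : ((Fintype.card F - 2 : ℕ) : ℤ) = (Fintype.card F : ℤ) - 2 := by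
          push_cast [Nat.cast_sub (by omega : 2 ≤ Fintype.card F)]; ring
        have h1 : ((Fintype.card F - 1 : ℕ) : ℤ) = (Fintype.card F : ℤ) - 1 := by
          push_cast [Nat.cast_sub (by omega : 1 ≤ Fintype.card F)]; ring
        rw [h2, h1] at this
        linarith [this]
      linear_combination this
    have habs : |(a : ℤ) - b| < (Fintype.card F : ℤ) - 1 := by
      rw [abs_lt]; constructor <;> [skip; skip] <;> omega
    have := Int.eq_zero_of_abs_lt_dvd hz habs
    omega
  · rintro rfl
    refine ⟨a, ?_⟩
    have h21 : Fintype.card F - 1 = (Fintype.card F - 2) + 1 := by omega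
    rw [h21]; ring

/-- For a finite field `F` with `q` elements, `x ∈ F^×`, and exponents
`r i ∈ {0, …, q-2}`, the sum `∑ x₁^{r 1} ⋯ xₙ^{r n}` over all `n`-tuples of units with
product `x` equals `(-1)^{n-1} x^r` if all the `r i` are equal to some `r`, and `0`
otherwise. -/
theorem stmt6 (F : Type*) [Field F] [Fintype F] [DecidableEq F] (n : ℕ) (hn : 1 ≤ n) (x : Fˣ)
    (r : Fin n → ℕ) (hr : ∀ i, r i ≤ Fintype.card F - 2) :
    (∑ t ∈ Finset.univ.filter (fun t : Fin n → Fˣ => ∏ i, t i = x),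
        ∏ i, ((t i : F) ^ (r i))) =
      if ∀ i j, r i = r j then (-1 : F) ^ (n - 1) * (x : F) ^ (r ⟨0, hn⟩) else 0 := by
  obtain ⟨m, rfl⟩ : ∃ m, n = m + 1 := ⟨n - 1, by omega⟩
  have step1 : (∑ t ∈ Finset.univ.filter (fun t : Fin (m+1) → Fˣ => ∏ i, t i = x),
        ∏ i, ((t i : F) ^ (r i)))
      = ∑ s : Fin m → Fˣ,
          ∏ i, ((Fin.cons (x * (∏ j, s j)⁻¹) s : Fin (m+1) → Fˣ) i : F) ^ (r i) := by
    have hrec : ∀ t ∈ Finset.univ.filter (fun t : Fin (m+1) → Fˣ => ∏ i, t i = x),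
        Fin.cons (x * (∏ j, Fin.tail t j)⁻¹) (Fin.tail t) = t := by
      intro t ht
      simp only [Finset.mem_filter, Finset.mem_univ, true_and] at ht
      have h0 : t 0 = x * (∏ j, Fin.tail t j)⁻¹ := by
        rw [Fin.prod_univ_succ] at ht
        exact eq_mul_inv_of_mul_eq ht
      funext i
      refine Fin.cases ?_ ?_ i
      · simpa using h0.symm
      · intro j; rfl
    refine Finset.sum_nbij' (fun t => Fin.tail t)
      (fun s => Fin.cons (x * (∏ j, s j)⁻¹) s) ?_ ?_ ?_ ?_ ?_
    · intro t _; exact Finset.mem_univ _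
    · intro s _
      simp only [Finset.mem_filter, Finset.mem_univ, true_and]
      rw [Fin.prod_univ_succ]
      simp [Fin.cons]
    · intro t ht; exact hrec t ht
    · intro s _; simp [Fin.tail_cons]
    · intro t ht
      conv_lhs => rw [← hrec t ht]
  rw [step1]
  have step2 : ∀ s : Fin m → Fˣ,
      (∏ i, ((Fin.cons (x * (∏ j, s j)⁻¹) s : Fin (m+1) → Fˣ) i : F) ^ (r i))
      = (x : F) ^ (r 0) * ∏ i : Fin m, ((s i : F) ^ (r i.succ) * (((s i)⁻¹ : Fˣ) : F) ^ (r 0)) := by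
    intro s
    rw [Fin.prod_univ_succ]
    simp only [Fin.cons_zero, Fin.cons_succ]
    have hinv : ((∏ j, s j)⁻¹ : Fˣ) = ∏ j, (s j)⁻¹ := by
      rw [← Finset.prod_inv_distrib]
    push_cast [hinv]
    rw [mul_pow, Finset.prod_mul_distrib, ← Finset.prod_pow]
    ring
  simp only [step2]
  rw [← Finset.mul_sum]
  have step3 : (∑ s : Fin m → Fˣ,
      ∏ i : Fin m, ((s i : F) ^ (r i.succ) * (((s i)⁻¹ : Fˣ) : F) ^ (r 0)))
      = ∏ i : Fin m, ∑ t : Fˣ, ((t : F) ^ (r i.succ) * ((t⁻¹ : Fˣ) : F) ^ (r 0)) := by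
    rw [Fintype.prod_sum]
  rw [step3]
  have step4 : ∀ i : Fin m, (∑ t : Fˣ, ((t : F) ^ (r i.succ) * ((t⁻¹ : Fˣ) : F) ^ (r 0)))
      = if r i.succ = r 0 then (-1 : F) else 0 := fun i => key F _ _ (hr _) (hr _)
  simp only [step4]
  have h0 : (⟨0, hn⟩ : Fin (m+1)) = 0 := rfl
  by_cases h : ∀ i j, r i = r j
  · rw [if_pos h]
    have : ∀ i : Fin m, (if r i.succ = r 0 then (-1 : F) else 0) = -1 := fun i => if_pos (h _ _)
    simp only [this, Finset.prod_const, Finset.card_univ, Fintype.card_fin]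
    rw [h0]
    have hm : m + 1 - 1 = m := by omega
    rw [hm]
    ring
  · rw [if_neg h]
    have : ∃ i : Fin m, r i.succ ≠ r 0 := by
      by_contra hc
      push_neg at hc
      apply h
      intro i j
      have key2 : ∀ i : Fin (m+1), r i = r 0 := by
        intro i
        refine Fin.cases rfl (fun j => hc j) i
      rw [key2 i, key2 j]
    obtain ⟨i, hi⟩ := this
    have hz : (∏ j : Fin m, if r j.succ = r 0 then (-1 : F) else 0) = 0 :=
      Finset.prod_eq_zero (Finset.mem_univ i) (by rw [if_neg hi])
    rw [hz, mul_zero]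
end

section
/- Let p be a prime, n ≥ 1, m ≥ 1, and c_1, ..., c_n ∈ {1, ..., p-2}. For an n-tuple d = (d_1, ..., d_n) of nonnegative integers define the polynomial u_d(X) = ∑_{r ≥ 0} (-1)^{nr} · binom(d_1, r) ⋯ binom(d_n, r) · X^r over F_p. Set c̃_i = c_i · (1 + p + ... + p^{m-1}). Then in F_p[X] one has u_{c̃}(X) = ∏_{j=0}^{m-1} u_c(X)^{p^j} (where u_c(X)^{p^j} = u_c(X^{p^j}) composed via Frobenius, i.e., the p^j-th power of the polynomial u_c). -/
open Polynomial

/-- The polynomial `u_d(X) = ∑_{r ≥ 0} (-1)^{nr} binom(d 1, r) ⋯ binom(d n, r) X^r`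
over `F_p` (the sum is finite since the binomial coefficients vanish for large `r`). -/
noncomputable def uPoly (p n : ℕ) (d : Fin n → ℕ) : Polynomial (ZMod p) :=
  ∑ r ∈ Finset.range ((∑ i, d i) + 1),
    C ((-1 : ZMod p) ^ (n * r) * ∏ i, ((d i).choose r : ZMod p)) * X ^ r

lemma coeff_uPoly (p n : ℕ) (hn : 0 < n) (d : Fin n → ℕ) (r : ℕ) :
    (uPoly p n d).coeff r = (-1 : ZMod p) ^ (n * r) * ∏ i, ((d i).choose r : ZMod p) := by
  rw [uPoly, finset_sum_coeff]
  simp only [coeff_C_mul, coeff_X_pow, mul_ite, mul_one, mul_zero]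
  rw [Finset.sum_ite_eq (Finset.range ((∑ i, d i) + 1)) r]
  split_ifs with h
  · rfl
  · rw [Finset.mem_range, Nat.lt_succ_iff, not_le] at h
    have i0 : Fin n := ⟨0, hn⟩
    have : ((d i0).choose r : ZMod p) = 0 := by
      rw [Nat.choose_eq_zero_of_lt, Nat.cast_zero]
      exact lt_of_le_of_lt (Finset.single_le_sum (fun i _ => Nat.zero_le (d i))
        (Finset.mem_univ i0)) h
    rw [Finset.prod_eq_zero (Finset.mem_univ i0) this, mul_zero]

lemma uPoly_add_pmul (p n : ℕ) [Fact p.Prime] (hn : 0 < n) (a b : Fin n → ℕ)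
    (ha : ∀ i, a i < p) :
    uPoly p n (fun i => a i + p * b i) = uPoly p n a * expand (ZMod p) p (uPoly p n b) := by
  have hp : 0 < p := (Fact.out : p.Prime).pos
  ext r
  rw [coeff_uPoly p n hn, coeff_mul]
  rw [Finset.sum_eq_single (r % p, p * (r / p))]
  · rw [coeff_expand hp, if_pos (Dvd.intro _ rfl), Nat.mul_div_cancel_left _ hp,
      coeff_uPoly p n hn, coeff_uPoly p n hn]
    have hsign : ((-1 : ZMod p)) ^ (n * r) =
        (-1 : ZMod p) ^ (n * (r % p)) * (-1 : ZMod p) ^ (n * (r / p)) := by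
      conv_lhs => rw [← Nat.mod_add_div r p]
      rw [Nat.mul_add, pow_add]
      congr 1
      rw [show n * (p * (r / p)) = (n * (r / p)) * p by ring, pow_mul, ZMod.pow_card]
    rw [hsign]
    have hchoose : ∀ i : Fin n, ((a i + p * b i).choose r : ZMod p) =
        ((a i).choose (r % p) : ZMod p) * ((b i).choose (r / p) : ZMod p) := by
      intro i
      have := (ZMod.natCast_eq_natCast_iff _ _ _).mpr
        (Choose.choose_modEq_choose_mod_mul_choose_div_nat
          (n := a i + p * b i) (k := r) (p := p))
      rw [this, Nat.add_mul_mod_self_left, Nat.mod_eq_of_lt (ha i),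
        Nat.add_mul_div_left _ _ hp, Nat.div_eq_of_lt (ha i), zero_add, Nat.cast_mul]
    rw [Finset.prod_congr rfl (fun i _ => hchoose i), Finset.prod_mul_distrib]
    ring
  · rintro ⟨x, y⟩ hxy hne
    rw [Finset.HasAntidiagonal.mem_antidiagonal] at hxy
    rcases eq_or_ne ((uPoly p n a).coeff x) 0 with h0 | h0
    · rw [h0, zero_mul]
    by_cases hy : y % p = 0
    swap
    · rw [coeff_expand hp, if_neg (fun hd => hy (Nat.mod_eq_zero_of_dvd hd)),
        mul_zero]
    · -- y divisible by p; show x = r % p, y = p * (r/p), contradiction with hne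
      exfalso
      have hx : x < p := by
        by_contra hx
        push_neg at hx
        apply h0
        rw [coeff_uPoly p n hn]
        have i0 : Fin n := ⟨0, hn⟩
        rw [Finset.prod_eq_zero (Finset.mem_univ i0)
          (by rw [Nat.choose_eq_zero_of_lt (lt_of_lt_of_le (ha i0) hx), Nat.cast_zero]),
          mul_zero]
      have hyd : p ∣ y := Nat.dvd_of_mod_eq_zero hy
      obtain ⟨t, rfl⟩ := hyd
      apply hne
      have : r % p = x ∧ r / p = t := by
        constructor
        · rw [← hxy, Nat.add_mul_mod_self_left, Nat.mod_eq_of_lt hx]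
        · rw [← hxy, Nat.add_mul_div_left _ _ hp, Nat.div_eq_of_lt hx, zero_add]
      rw [this.1, this.2]
  · intro h
    exfalso
    apply h
    rw [Finset.HasAntidiagonal.mem_antidiagonal]
    exact Nat.mod_add_div r p

lemma pow_p_eq_expand (p : ℕ) [Fact p.Prime] (f : Polynomial (ZMod p)) :
    f ^ p = expand (ZMod p) p f := by
  rw [← Polynomial.map_frobenius_expand p f, ZMod.frobenius_zmod, Polynomial.map_id]

/-- For `c i ∈ {1, …, p-2}` and `c̃ i = c i · (1 + p + ⋯ + p^{m-1})`, one has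
`u_{c̃}(X) = ∏_{j=0}^{m-1} u_c(X)^{p^j}` in `F_p[X]`. -/
theorem stmt8 (p : ℕ) [Fact p.Prime] (n m : ℕ) (hn : 1 ≤ n) (hm : 1 ≤ m)
    (c : Fin n → ℕ) (hc : ∀ i, 1 ≤ c i ∧ c i ≤ p - 2) :
    uPoly p n (fun i => c i * ∑ j ∈ Finset.range m, p ^ j) =
      ∏ j ∈ Finset.range m, (uPoly p n c) ^ (p ^ j) := by
  have hp : 2 ≤ p := (Fact.out : p.Prime).two_le
  have hcp : ∀ i, c i < p := fun i => by have := (hc i).2; omega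
  clear hm
  induction m with
  | zero =>
    simp only [Finset.range_zero, Finset.sum_empty, Nat.mul_zero, Finset.prod_empty]
    rw [uPoly]
    simp
  | succ m ih =>
    have hsum : (fun i => c i * ∑ j ∈ Finset.range (m + 1), p ^ j) =
        (fun i => c i + p * (c i * ∑ j ∈ Finset.range m, p ^ j)) := by
      funext i
      rw [Finset.sum_range_succ', pow_zero]
      simp only [pow_succ']
      rw [← Finset.mul_sum]
      ring
    rw [hsum, uPoly_add_pmul p n hn c _ hcp, ih, Finset.prod_range_succ']
    simp only [pow_zero, pow_one]
    rw [mul_comm]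
    congr 1
    rw [← pow_p_eq_expand, ← Finset.prod_pow]
    apply Finset.prod_congr rfl
    intro j _
    rw [← pow_mul, pow_succ]
end

section
/- Let n, m ≥ 1, p a prime, and c_1, ..., c_n ∈ {1, ..., p-2}. For x ∈ F_{p^m}^× with x ≠ 1, set c̃_i = c_i(1 + p + ... + p^{m-1}) and S(x) = ∑ (1-x_1)^{c̃_1} ⋯ (1-x_n)^{c̃_n}, the sum over all (x_1, ..., x_n) ∈ (F_{p^m}^×)^n with x_1 ⋯ x_n = x. Then S(x) = (-1)^{n-1} · u_{c̃}(x), where u_{c̃}(X) = ∑_{r ≥ 0} (-1)^{nr} binom(c̃_1, r) ⋯ binom(c̃_n, r) X^r reduced mod p. -/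
open Finset

lemma key_lemma (K : Type*) [Field K] [Fintype K] [DecidableEq K]
    (n : ℕ) (hn : 1 ≤ n) : ∀ (x : Kˣ) (r : Fin n → ℕ),
    (∀ i, r i < Fintype.card K - 1) →
    (∑ t ∈ Finset.univ.filter (fun t : Fin n → Kˣ => ∏ i, t i = x),
        ∏ i, (t i : K) ^ (r i)) =
      if ∀ i, r i = r ⟨0, hn⟩ then (-1 : K) ^ (n - 1) * (x : K) ^ (r ⟨0, hn⟩) else 0 := by
  induction n, hn using Nat.le_induction with
  | base =>
    intro x r _
    rw [if_pos (fun i => congrArg r (Subsingleton.elim _ _))]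
    simp only [Fin.prod_univ_one]
    rw [Finset.sum_filter, ← Equiv.sum_comp (Equiv.funUnique (Fin 1) Kˣ).symm]
    simp only [Equiv.funUnique_symm_apply, uniqueElim_const]
    rw [Finset.sum_ite_eq' Finset.univ x (fun u : Kˣ => (u : K) ^ r 0)]
    norm_num
  | succ n hn ih =>
    intro x r hr
    set ρ := r (Fin.succ ⟨0, hn⟩) with hρ
    have hq1 : 0 < Fintype.card K - 1 := lt_of_le_of_lt (Nat.zero_le _) (hr 0)
    rw [Finset.sum_filter, ← Equiv.sum_comp (Fin.consEquiv (fun _ : Fin (n+1) => Kˣ)),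
      Fintype.sum_prod_type]
    have step1 : ∀ u : Kˣ,
        (∑ s : Fin n → Kˣ,
          if (∏ i, ((Fin.consEquiv (fun _ : Fin (n+1) => Kˣ)) (u, s)) i) = x then
            ∏ i, ((((Fin.consEquiv (fun _ : Fin (n+1) => Kˣ)) (u, s)) i : K)) ^ r i else 0) =
        (u : K) ^ (r 0) *
          (if (∀ i : Fin n, r i.succ = ρ) then
            (-1 : K) ^ (n - 1) * (((u⁻¹ : Kˣ) : K)) ^ ρ * ((x : K)) ^ ρ else 0) := by
      intro u
      simp only [Fin.consEquiv_apply, Fin.prod_univ_succ, Fin.cons_zero, Fin.cons_succ]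
      have hcond : ∀ s : Fin n → Kˣ, (u * ∏ i, s i = x) = (∏ i, s i = u⁻¹ * x) := by
        intro s; rw [eq_comm, eq_inv_mul_iff_mul_eq]
      have hpull : ∀ s : Fin n → Kˣ,
          (if (∏ i, s i = u⁻¹ * x) then (u : K) ^ r 0 * ∏ i, ((s i : K)) ^ r i.succ else 0) =
          (u : K) ^ r 0 * (if (∏ i, s i = u⁻¹ * x) then ∏ i, ((s i : K)) ^ r i.succ else 0) := by
        intro s; split <;> simp
      simp only [hcond, hpull]
      rw [← Finset.mul_sum, ← Finset.sum_filter,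
        ih (u⁻¹ * x) (fun i => r i.succ) (fun i => hr i.succ)]
      congr 1
      split
      · rw [Units.val_mul, mul_pow]; ring
      · rfl
    rw [Finset.sum_congr rfl (fun u _ => step1 u)]
    by_cases hC : ∀ i : Fin n, r i.succ = ρ
    · simp only [if_pos hC]
      have hval : ∀ u : Kˣ, (u : K) ^ (r 0) *
            ((-1 : K) ^ (n - 1) * (((u⁻¹ : Kˣ) : K)) ^ ρ * ((x : K)) ^ ρ) =
          ((-1 : K) ^ (n - 1) * ((x : K)) ^ ρ) * (u : K) ^ (r 0 + (Fintype.card K - 1 - ρ)) := by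
        intro u
        have hpow1 : (u : K) ^ (Fintype.card K - 1) = 1 := by
          have h : u ^ Fintype.card Kˣ = 1 := pow_card_eq_one
          rw [Fintype.card_units] at h
          calc (u : K) ^ (Fintype.card K - 1) = ((u ^ (Fintype.card K - 1) : Kˣ) : K) := by
                rw [Units.val_pow_eq_pow_val]
            _ = 1 := by rw [h, Units.val_one]
        have hinv : (((u⁻¹ : Kˣ) : K)) ^ ρ = (u : K) ^ (Fintype.card K - 1 - ρ) := by
          have hne : (u : K) ^ ρ ≠ 0 := pow_ne_zero ρ (Units.ne_zero u)
          apply mul_right_cancel₀ hne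
          rw [← mul_pow, ← Units.val_mul, inv_mul_cancel, Units.val_one, one_pow,
            ← pow_add, Nat.sub_add_cancel (le_of_lt (lt_of_lt_of_le (hr _) (le_refl _))), hpow1]
        rw [hinv, pow_add]
        ring
      rw [Finset.sum_congr rfl (fun u _ => hval u), ← Finset.mul_sum]
      have hsum : (∑ u : Kˣ, (u : K) ^ (r 0 + (Fintype.card K - 1 - ρ))) =
          if (Fintype.card K - 1) ∣ (r 0 + (Fintype.card K - 1 - ρ)) then (-1 : K) else 0 := by
        rw [← FiniteField.sum_pow_units K]
      rw [hsum]
      by_cases h01 : r 0 = ρ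
      · rw [if_pos (by rw [h01]; exact ⟨1, by have := hr 0; omega⟩)]
        rw [if_pos (fun i => by
          refine Fin.cases ?_ (fun j => ?_) i
          · rfl
          · exact (hC j).trans (h01.symm.trans (congrArg r rfl)))]
        have : r (⟨0, Nat.succ_le_succ (Nat.zero_le n)⟩ : Fin (n+1)) = r 0 := rfl
        rw [this, h01]
        have hn1 : n + 1 - 1 = n := rfl
        rw [hn1]
        have : (-1 : K) ^ n = (-1 : K) ^ (n - 1) * (-1) := by
          conv_lhs => rw [show n = (n - 1) + 1 by omega]
          rw [pow_succ]
        rw [this]; ring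
      · rw [if_neg (by
          rintro ⟨k, hk⟩
          have h1 : r 0 < Fintype.card K - 1 := hr 0
          have h2 : ρ < Fintype.card K - 1 := hr _
          have hk1 : 1 ≤ k := by
            rcases Nat.eq_zero_or_pos k with h | h
            · subst h; rw [Nat.mul_zero] at hk; omega
            · exact h
          have hk2 : k < 2 := by
            have hlt : (Fintype.card K - 1) * k < (Fintype.card K - 1) * 2 := by omega
            exact Nat.lt_of_mul_lt_mul_left hlt
          have : k = 1 := by omega
          subst this
          rw [Nat.mul_one] at hk
          omega)]
        rw [if_neg (fun h => h01 ((h 0).trans (h (Fin.succ ⟨0, hn⟩)).symm))]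
        ring
    · simp only [if_neg hC, mul_zero, Finset.sum_const_zero]
      rw [if_neg (fun h => hC (fun i => (h i.succ).trans (h (Fin.succ ⟨0, hn⟩)).symm))]

lemma geom_aux (p : ℕ) (hp2 : 2 ≤ p) : ∀ M : ℕ,
    (p - 1) * (∑ j ∈ Finset.range M, p ^ j) + 1 = p ^ M := by
  intro M
  induction M with
  | zero => simp
  | succ M ihM =>
    rw [Finset.sum_range_succ, Nat.mul_add, pow_succ']
    have h1 : (p - 1) * p ^ M = p * p ^ M - p ^ M := by rw [Nat.sub_mul, one_mul]
    have h2 : p ^ M ≤ p * p ^ M := Nat.le_mul_of_pos_left _ (by omega)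
    omega



/-- Let `K = F_{p^m}`, `c i ∈ {1, …, p-2}`, `c̃ i = c i (1 + p + ⋯ + p^{m-1})`, and
`x ∈ K^×` with `x ≠ 1`. Then the sum `S(x) = ∑ (1-x₁)^{c̃ 1} ⋯ (1-xₙ)^{c̃ n}` over all
tuples of units with product `x` equals `(-1)^{n-1} u_{c̃}(x)`, where
`u_{c̃}(X) = ∑_r (-1)^{nr} binom(c̃ 1, r) ⋯ binom(c̃ n, r) X^r` reduced mod `p`. -/
theorem stmt17 (p n m : ℕ) (hp : p.Prime) (hn : 1 ≤ n) (hm : 1 ≤ m)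
    (c : Fin n → ℕ) (hc : ∀ i, 1 ≤ c i ∧ c i ≤ p - 2)
    (K : Type*) [Field K] [Fintype K] [DecidableEq K] (hcard : Fintype.card K = p ^ m)
    (x : Kˣ) (hx : (x : K) ≠ 1) :
    (∑ t ∈ Finset.univ.filter (fun t : Fin n → Kˣ => ∏ i, t i = x),
        ∏ i, (1 - (t i : K)) ^ (c i * ∑ j ∈ Finset.range m, p ^ j)) =
      (-1 : K) ^ (n - 1) *
        ∑ r ∈ Finset.range ((∑ i, c i * ∑ j ∈ Finset.range m, p ^ j) + 1),
          (-1 : K) ^ (n * r) *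
            (∏ i, ((c i * ∑ j ∈ Finset.range m, p ^ j).choose r : K)) * (x : K) ^ r := by

  classical
  set s : ℕ := ∑ j ∈ Finset.range m, p ^ j with hsdef
  have hp2 : 2 ≤ p := hp.two_le
  have hs1 : 1 ≤ s := by
    calc 1 = p ^ 0 := (pow_zero p).symm
    _ ≤ s := Finset.single_le_sum (f := fun j => p ^ j) (fun j _ => Nat.zero_le _)
        (Finset.mem_range.mpr hm)
  have hgeom : (p - 1) * s + 1 = p ^ m := geom_aux p hp2 m
  have hcc : ∀ i, c i * s < Fintype.card K - 1 := by
    intro i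
    rw [hcard]
    have h1 : c i * s ≤ (p - 2) * s := Nat.mul_le_mul_right s (hc i).2
    have h2 : (p - 2) * s = p * s - 2 * s := by rw [Nat.sub_mul]
    have h3 : (p - 1) * s = p * s - 1 * s := by rw [Nat.sub_mul]
    have h4 : 2 * s ≤ p * s := Nat.mul_le_mul_right s hp2
    omega
  set G := Fintype.piFinset (fun i : Fin n => Finset.range (c i * s + 1)) with hG
  set T := Finset.univ.filter (fun t : Fin n → Kˣ => ∏ i, t i = x) with hT
  have binom : ∀ (a : K) (N : ℕ),
      (1 - a) ^ N = ∑ k ∈ Finset.range (N + 1), (-1 : K) ^ k * a ^ k * (N.choose k : K) := by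
    intro a N
    rw [sub_eq_add_neg, add_comm, add_pow]
    refine Finset.sum_congr rfl fun k _ => ?_
    rw [one_pow, neg_pow]
    ring
  calc
    (∑ t ∈ T, ∏ i, (1 - (t i : K)) ^ (c i * s))
      = ∑ t ∈ T, ∏ i, ∑ k ∈ Finset.range (c i * s + 1),
          (-1 : K) ^ k * (t i : K) ^ k * ((c i * s).choose k : K) :=
        Finset.sum_congr rfl fun t _ => Finset.prod_congr rfl fun i _ => binom _ _
    _ = ∑ t ∈ T, ∑ g ∈ G, ∏ i,
          ((-1 : K) ^ (g i) * (t i : K) ^ (g i) * ((c i * s).choose (g i) : K)) :=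
        Finset.sum_congr rfl fun t _ => Finset.prod_univ_sum _ _
    _ = ∑ g ∈ G, ∑ t ∈ T, ∏ i,
          ((-1 : K) ^ (g i) * (t i : K) ^ (g i) * ((c i * s).choose (g i) : K)) :=
        Finset.sum_comm
    _ = ∑ g ∈ G, (∏ i, (-1 : K) ^ (g i) * ((c i * s).choose (g i) : K)) *
          ∑ t ∈ T, ∏ i, (t i : K) ^ (g i) := by
        refine Finset.sum_congr rfl fun g _ => ?_
        rw [Finset.mul_sum]
        refine Finset.sum_congr rfl fun t _ => ?_
        rw [← Finset.prod_mul_distrib]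
        exact Finset.prod_congr rfl fun i _ => by ring
    _ = ∑ g ∈ G, (∏ i, (-1 : K) ^ (g i) * ((c i * s).choose (g i) : K)) *
          (if ∀ i, g i = g ⟨0, hn⟩ then (-1 : K) ^ (n - 1) * (x : K) ^ (g ⟨0, hn⟩) else 0) := by
        refine Finset.sum_congr rfl fun g hg => ?_
        rw [key_lemma K n hn x g (fun i => lt_of_le_of_lt
          (Nat.lt_succ_iff.mp (Finset.mem_range.mp (Fintype.mem_piFinset.mp hg i))) (hcc i))]
    _ = ∑ g ∈ G.filter (fun g => ∀ i, g i = g ⟨0, hn⟩),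
          (∏ i, (-1 : K) ^ (g i) * ((c i * s).choose (g i) : K)) *
            ((-1 : K) ^ (n - 1) * (x : K) ^ (g ⟨0, hn⟩)) := by
        rw [Finset.sum_filter]
        refine Finset.sum_congr rfl fun g _ => ?_
        split <;> simp
    _ = ∑ r ∈ (Finset.range ((∑ i, c i * s) + 1)).filter (fun r => ∀ i, r ≤ c i * s),
          (-1 : K) ^ (n * r) * (∏ i, ((c i * s).choose r : K)) *
            ((-1 : K) ^ (n - 1) * (x : K) ^ r) := by
        refine Finset.sum_nbij' (fun g => g ⟨0, hn⟩) (fun r => fun _ => r) ?_ ?_ ?_ ?_ ?_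
        · intro g hg
          rw [Finset.mem_filter] at hg ⊢
          obtain ⟨hg1, hg2⟩ := hg
          have hgle : ∀ i, g ⟨0, hn⟩ ≤ c i * s := fun i => (hg2 i) ▸
            Nat.lt_succ_iff.mp (Finset.mem_range.mp (Fintype.mem_piFinset.mp hg1 i))
          refine ⟨Finset.mem_range.mpr (Nat.lt_succ_of_le ?_), hgle⟩
          exact le_trans (hgle ⟨0, hn⟩)
            (Finset.single_le_sum (f := fun i => c i * s) (fun i _ => Nat.zero_le _)
              (Finset.mem_univ _))
        · intro r hr
          rw [Finset.mem_filter] at hr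
          rw [Finset.mem_filter]
          exact ⟨Fintype.mem_piFinset.mpr fun i => Finset.mem_range.mpr
            (Nat.lt_succ_of_le (hr.2 i)), fun i => rfl⟩
        · intro g hg
          rw [Finset.mem_filter] at hg
          funext i
          exact (hg.2 i).symm
        · intro r _; rfl
        · intro g hg
          rw [Finset.mem_filter] at hg
          have hconst : ∀ i, g i = g ⟨0, hn⟩ := hg.2
          have : (∏ i, (-1 : K) ^ (g i) * ((c i * s).choose (g i) : K)) =
              (-1 : K) ^ (n * g ⟨0, hn⟩) * ∏ i, ((c i * s).choose (g ⟨0, hn⟩) : K) := by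
            rw [Finset.prod_congr rfl (fun i (_ : i ∈ Finset.univ) => by rw [hconst i]),
              Finset.prod_mul_distrib, Finset.prod_const, Finset.card_univ, Fintype.card_fin,
              ← pow_mul, mul_comm (g ⟨0, hn⟩) n]
          rw [this]
    _ = ∑ r ∈ Finset.range ((∑ i, c i * s) + 1),
          (-1 : K) ^ (n * r) * (∏ i, ((c i * s).choose r : K)) *
            ((-1 : K) ^ (n - 1) * (x : K) ^ r) := by
        refine Finset.sum_subset (Finset.filter_subset _ _) ?_
        intro r hr1 hr2
        rw [Finset.mem_filter, not_and] at hr2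
        have := hr2 hr1
        push_neg at this
        obtain ⟨i, hi⟩ := this
        rw [Finset.prod_eq_zero (Finset.mem_univ i)
          (by rw [Nat.choose_eq_zero_of_lt hi, Nat.cast_zero])]
        ring
    _ = (-1 : K) ^ (n - 1) * ∑ r ∈ Finset.range ((∑ i, c i * s) + 1),
          (-1 : K) ^ (n * r) * (∏ i, ((c i * s).choose r : K)) * (x : K) ^ r := by
        rw [Finset.mul_sum]
        exact Finset.sum_congr rfl fun r _ => by ring
end
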